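/- Let X : [0,T) × ℝ → ℝ² be a smooth family of closed curves. Then the signed enclosed area A(t) = ½ ∫₀¹ X(t,u)·(∂ₓX(t,u))^⊥ du is differentiable in t and satisfies the first-variation formula dA/dt (t) = ∫₀¹ (∂ₜX(t,u) · n(t,u)) |∂ᵤX(t,u)| du, i.e. only the normal component of the velocity changes the enclosed area. -/

import Mathlib

open Set MeasureTheory Real Filter
open scoped RealInnerProductSpace Topology

noncomputable section

abbrev E2 : Type := EuclideanSpace ℝ (Fin 2)

def perp (p : E2) : E2 := (WithLp.equiv 2 (Fin 2 → ℝ)).symm ![p 1, -(p 0)]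

def unitNormal (Y : ℝ → E2) (u : ℝ) : E2 := ‖deriv Y u‖⁻¹ • perp (deriv Y u)

def curvature (Y : ℝ → E2) (u : ℝ) : ℝ :=
  -(‖deriv Y u‖⁻¹ * ⟪deriv (fun v => ‖deriv Y v‖⁻¹ • deriv Y v) u, unitNormal Y u⟫)

def curveLength (Y : ℝ → E2) : ℝ := ∫ u in (0:ℝ)..1, ‖deriv Y u‖

def enclosedArea (Y : ℝ → E2) : ℝ := (1/2) * ∫ u in (0:ℝ)..1, ⟪Y u, perp (deriv Y u)⟫

def IsSmoothClosedCurve (Y : ℝ → E2) : Prop :=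
  ContDiff ℝ 2 Y ∧ (∀ u, Y (u + 1) = Y u) ∧ ∀ u, deriv Y u ≠ 0

def IsSmoothClosedFamily (T : ℝ) (X : ℝ → ℝ → E2) : Prop :=
  ContDiffOn ℝ 2 (fun p : ℝ × ℝ => X p.1 p.2) (Ico 0 T ×ˢ univ) ∧
  ∀ t ∈ Ico 0 T, IsSmoothClosedCurve (X t)

lemma perp_apply_zero (p : E2) : perp p 0 = p 1 := rfl
lemma perp_apply_one (p : E2) : perp p 1 = -(p 0) := rfl

def perpL : E2 →L[ℝ] E2 :=
  LinearMap.toContinuousLinearMap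
  { toFun := perp
    map_add' := by
      intro x y; ext i
      fin_cases i <;> simp [perp_apply_zero, perp_apply_one] <;> ring
    map_smul' := by
      intro c x; ext i
      fin_cases i <;> simp [perp_apply_zero, perp_apply_one] <;> ring }

lemma perpL_apply (p : E2) : perpL p = perp p := rfl

lemma inner_perp_antisymm (a b : E2) : ⟪a, perp b⟫ = -⟪b, perp a⟫ := by
  simp only [PiLp.inner_apply, RCLike.inner_apply, starRingEnd_apply, Fin.sum_univ_two,
    perp_apply_zero, perp_apply_one, star_trivial]
  ring

def SJ (T : ℝ) : Set (ℝ × ℝ) := Ico 0 T ×ˢ univ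

def XJ (X : ℝ → ℝ → E2) : ℝ × ℝ → E2 := fun p => X p.1 p.2

def FD (T : ℝ) (X : ℝ → ℝ → E2) : ℝ × ℝ → (ℝ × ℝ) →L[ℝ] E2 :=
  fderivWithin ℝ (XJ X) (SJ T)

def FDD (T : ℝ) (X : ℝ → ℝ → E2) : ℝ × ℝ → (ℝ × ℝ) →L[ℝ] ((ℝ × ℝ) →L[ℝ] E2) :=
  fderivWithin ℝ (FD T X) (SJ T)

def gJ (T : ℝ) (X : ℝ → ℝ → E2) : ℝ × ℝ → ℝ := fun p =>
  ⟪FD T X p (1, 0), perp (FD T X p (0, 1))⟫ + ⟪XJ X p, perp (FDD T X p (0, 1) (1, 0))⟫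

section Aux

variable {T : ℝ} {X : ℝ → ℝ → E2}

lemma interior_SJ (hT : 0 < T) : interior (SJ T) = Ioo 0 T ×ˢ univ := by
  rw [SJ, interior_prod_eq, interior_Ico, interior_univ]

lemma convex_SJ : Convex ℝ (SJ T) := (convex_Ico 0 T).prod convex_univ

lemma nonempty_interior_SJ (hT : 0 < T) : (interior (SJ T)).Nonempty := by
  rw [interior_SJ hT]
  exact (nonempty_Ioo.2 hT).prod univ_nonempty

lemma uniqueDiffOn_SJ (hT : 0 < T) : UniqueDiffOn ℝ (SJ T) :=
  uniqueDiffOn_convex convex_SJ (nonempty_interior_SJ hT)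

lemma mem_SJ_iff {p : ℝ × ℝ} : p ∈ SJ T ↔ p.1 ∈ Ico 0 T := by
  simp [SJ]

lemma contDiffOn_XJ (hX : IsSmoothClosedFamily T X) : ContDiffOn ℝ 2 (XJ X) (SJ T) := hX.1

lemma hasFDerivWithinAt_XJ (hT : 0 < T) (hX : IsSmoothClosedFamily T X) {p : ℝ × ℝ}
    (hp : p ∈ SJ T) : HasFDerivWithinAt (XJ X) (FD T X p) (SJ T) p :=
  (((contDiffOn_XJ hX).differentiableOn (by norm_num)) p hp).hasFDerivWithinAt

lemma contDiffOn_FD (hT : 0 < T) (hX : IsSmoothClosedFamily T X) :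
    ContDiffOn ℝ 1 (FD T X) (SJ T) :=
  (contDiffOn_XJ hX).fderivWithin (uniqueDiffOn_SJ hT) (by norm_num)

lemma hasFDerivWithinAt_FD (hT : 0 < T) (hX : IsSmoothClosedFamily T X) {p : ℝ × ℝ}
    (hp : p ∈ SJ T) : HasFDerivWithinAt (FD T X) (FDD T X p) (SJ T) p :=
  (((contDiffOn_FD hT hX).differentiableOn (by norm_num)) p hp).hasFDerivWithinAt

lemma continuousOn_FD (hT : 0 < T) (hX : IsSmoothClosedFamily T X) :
    ContinuousOn (FD T X) (SJ T) := (contDiffOn_FD hT hX).continuousOn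

lemma continuousOn_FDD (hT : 0 < T) (hX : IsSmoothClosedFamily T X) :
    ContinuousOn (FDD T X) (SJ T) :=
  (contDiffOn_FD hT hX).continuousOn_fderivWithin (uniqueDiffOn_SJ hT) (by norm_num)

end Aux

section Slice

variable {T : ℝ} {X : ℝ → ℝ → E2}

lemma line1_hasDerivAt (u t : ℝ) : HasDerivAt (fun r : ℝ => (r, u)) ((1 : ℝ), (0 : ℝ)) t :=
  (hasDerivAt_id t).prodMk (hasDerivAt_const t u)

lemma line2_hasDerivAt (s u : ℝ) : HasDerivAt (fun v : ℝ => (s, v)) ((0 : ℝ), (1 : ℝ)) u :=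
  (hasDerivAt_const u s).prodMk (hasDerivAt_id u)

lemma line1_mapsTo {u : ℝ} : MapsTo (fun r : ℝ => (r, u)) (Ico 0 T) (SJ T) :=
  fun r hr => by simpa [mem_SJ_iff] using hr

lemma line2_mapsTo {s : ℝ} (hs : s ∈ Ico 0 T) :
    MapsTo (fun v : ℝ => (s, v)) (univ : Set ℝ) (SJ T) :=
  fun v _ => by simpa [mem_SJ_iff] using hs

/-- `∂ᵤ X = FD e₂` -/
lemma deriv_X_eq (hT : 0 < T) (hX : IsSmoothClosedFamily T X) {s : ℝ} (hs : s ∈ Ico 0 T)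
    (u : ℝ) : deriv (X s) u = FD T X (s, u) (0, 1) := by
  have h := (hasFDerivWithinAt_XJ hT hX (mem_SJ_iff.2 hs)).comp_hasDerivWithinAt u
    ((line2_hasDerivAt s u).hasDerivWithinAt (s := univ)) (line2_mapsTo hs)
  rw [hasDerivWithinAt_univ] at h
  have he : (XJ X ∘ fun v => (s, v)) = X s := rfl
  rw [he] at h
  exact h.deriv

/-- `∂ₜ X` within: -/
lemma hasDerivWithinAt_V (hT : 0 < T) (hX : IsSmoothClosedFamily T X) {t : ℝ} (ht : t ∈ Ico 0 T)
    (u : ℝ) : HasDerivWithinAt (fun r => X r u) (FD T X (t, u) (1, 0)) (Ico 0 T) t :=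
  (hasFDerivWithinAt_XJ hT hX (mem_SJ_iff.2 ht)).comp_hasDerivWithinAt t
    ((line1_hasDerivAt u t).hasDerivWithinAt) line1_mapsTo

/-- `∂ₜ (FD · e₂) = FDD e₁ e₂` within -/
lemma hasDerivWithinAt_dtd (hT : 0 < T) (hX : IsSmoothClosedFamily T X) {t : ℝ}
    (ht : t ∈ Ico 0 T) (u : ℝ) :
    HasDerivWithinAt (fun r => deriv (X r) u) (FDD T X (t, u) (1, 0) (0, 1)) (Ico 0 T) t := by
  have h1 : HasDerivWithinAt (fun r => FD T X (r, u)) (FDD T X (t, u) (1, 0)) (Ico 0 T) t :=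
    (hasFDerivWithinAt_FD hT hX (mem_SJ_iff.2 ht)).comp_hasDerivWithinAt t
      ((line1_hasDerivAt u t).hasDerivWithinAt) line1_mapsTo
  have h2 := ((ContinuousLinearMap.apply ℝ E2 ((0:ℝ), (1:ℝ))).hasFDerivAt).comp_hasDerivWithinAt
    t h1
  exact h2.congr (fun r hr => (deriv_X_eq hT hX hr u)) (deriv_X_eq hT hX ht u)

/-- `∂ᵤ (FD · e₁) = FDD e₂ e₁` (full derivative in `u`) -/
lemma hasDerivAt_dud (hT : 0 < T) (hX : IsSmoothClosedFamily T X) {t : ℝ}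
    (ht : t ∈ Ico 0 T) (u : ℝ) :
    HasDerivAt (fun v => FD T X (t, v) (1, 0)) (FDD T X (t, u) (0, 1) (1, 0)) u := by
  have h1 : HasDerivWithinAt (fun v => FD T X (t, v)) (FDD T X (t, u) (0, 1)) univ u :=
    (hasFDerivWithinAt_FD hT hX (mem_SJ_iff.2 ht)).comp_hasDerivWithinAt u
      ((line2_hasDerivAt t u).hasDerivWithinAt) (line2_mapsTo ht)
  rw [hasDerivWithinAt_univ] at h1
  exact ((ContinuousLinearMap.apply ℝ E2 ((1:ℝ), (0:ℝ))).hasFDerivAt).comp_hasDerivAt u h1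

/-- Clairaut / symmetry of second derivatives -/
lemma FDD_symm (hT : 0 < T) (hX : IsSmoothClosedFamily T X) {p : ℝ × ℝ} (hp : p ∈ SJ T)
    (v w : ℝ × ℝ) : FDD T X p v w = FDD T X p w v := by
  refine convex_SJ.second_derivative_within_at_symmetric (f := XJ X) (nonempty_interior_SJ hT)
    (fun y hy => ?_) hp ((hasFDerivWithinAt_FD hT hX hp).mono interior_subset) v w
  exact (hasFDerivWithinAt_XJ hT hX (interior_subset hy)).hasFDerivAt
    (mem_interior_iff_mem_nhds.1 hy)

end Slice

section DerivInt

variable {T : ℝ} {X : ℝ → ℝ → E2}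

/-- time-derivative of the area integrand -/
lemma hasDerivWithinAt_integrand (hT : 0 < T) (hX : IsSmoothClosedFamily T X) (u : ℝ) {t : ℝ}
    (ht : t ∈ Ico 0 T) :
    HasDerivWithinAt (fun r => ⟪X r u, perp (deriv (X r) u)⟫) (gJ T X (t, u)) (Ico 0 T) t := by
  have a := hasDerivWithinAt_V hT hX ht u
  have b := hasDerivWithinAt_dtd hT hX ht u
  have bp := (perpL.hasFDerivAt).comp_hasDerivWithinAt t b
  have h2 : HasDerivWithinAt (fun r => ⟪X r u, perp (deriv (X r) u)⟫)
      (⟪X t u, perp (FDD T X (t, u) (1, 0) (0, 1))⟫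
        + ⟪FD T X (t, u) (1, 0), perp (deriv (X t) u)⟫) (Ico 0 T) t :=
    HasDerivWithinAt.inner ℝ a bp
  have e : gJ T X (t, u) = ⟪X t u, perp (FDD T X (t, u) (1, 0) (0, 1))⟫
      + ⟪FD T X (t, u) (1, 0), perp (deriv (X t) u)⟫ := by
    rw [gJ, FDD_symm hT hX (mem_SJ_iff.2 ht) (0, 1) (1, 0), deriv_X_eq hT hX ht u]
    rw [add_comm]; rfl
  rw [e]; exact h2

lemma deriv_periodic (hX : IsSmoothClosedFamily T X) {t : ℝ} (ht : t ∈ Ico 0 T) (u : ℝ) :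
    deriv (X t) (u + 1) = deriv (X t) u := by
  have hper := (hX.2 t ht).2.1
  have : X t = fun v => X t (v + 1) := funext fun v => (hper v).symm
  conv_rhs => rw [this]
  rw [deriv_comp_add_const]

lemma V_periodic (hT : 0 < T) (hX : IsSmoothClosedFamily T X) {t : ℝ} (ht : t ∈ Ico 0 T)
    (u : ℝ) : FD T X (t, u + 1) (1, 0) = FD T X (t, u) (1, 0) := by
  have h1 := hasDerivWithinAt_V hT hX ht (u + 1)
  have h2 := (hasDerivWithinAt_V hT hX ht u).congr
    (fun r hr => (hX.2 r hr).2.1 u) ((hX.2 t ht).2.1 u)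
  have hu : UniqueDiffWithinAt ℝ (Ico 0 T) t := uniqueDiffOn_Ico 0 T t ht
  rw [← h1.derivWithin hu, ← h2.derivWithin hu]

lemma continuousOn_gJ (hT : 0 < T) (hX : IsSmoothClosedFamily T X) :
    ContinuousOn (gJ T X) (SJ T) := by
  have hFD := continuousOn_FD hT hX
  have hFDD := continuousOn_FDD hT hX
  have hXc := (contDiffOn_XJ hX).continuousOn
  have c1 : ContinuousOn (fun p => FD T X p ((1:ℝ), (0:ℝ))) (SJ T) :=
    ((ContinuousLinearMap.apply ℝ E2 ((1:ℝ), (0:ℝ))).continuous).comp_continuousOn hFD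
  have c2 : ContinuousOn (fun p => perp (FD T X p ((0:ℝ), (1:ℝ)))) (SJ T) :=
    perpL.continuous.comp_continuousOn
      (((ContinuousLinearMap.apply ℝ E2 ((0:ℝ), (1:ℝ))).continuous).comp_continuousOn hFD)
  have c3 : ContinuousOn (fun p => perp (FDD T X p ((0:ℝ), (1:ℝ)) ((1:ℝ), (0:ℝ)))) (SJ T) :=
    perpL.continuous.comp_continuousOn
      (((ContinuousLinearMap.apply ℝ E2 ((1:ℝ), (0:ℝ))).continuous).comp_continuousOn
        (((ContinuousLinearMap.apply ℝ ((ℝ × ℝ) →L[ℝ] E2) ((0:ℝ),(1:ℝ))).continuous).comp_continuousOn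
          hFDD))
  exact (c1.inner c2).add (hXc.inner c3)

lemma continuous_slice_u {β : Type*} [TopologicalSpace β] {W : ℝ × ℝ → β}
    (h : ContinuousOn W (SJ T)) {t : ℝ} (ht : t ∈ Ico 0 T) :
    Continuous (fun v => W (t, v)) := by
  rw [← continuousOn_univ]
  exact h.comp (Continuous.continuousOn (by fun_prop)) (line2_mapsTo ht)

lemma continuousOn_slice_t {β : Type*} [TopologicalSpace β] {W : ℝ × ℝ → β}
    (h : ContinuousOn W (SJ T)) (u : ℝ) :
    ContinuousOn (fun r => W (r, u)) (Ico 0 T) :=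
  h.comp (Continuous.continuousOn (by fun_prop)) line1_mapsTo

end DerivInt

def Gf (T : ℝ) (X : ℝ → ℝ → E2) : ℝ → ℝ := fun r => ∫ u in (0:ℝ)..1, gJ T X (r, u)

def F1 (X : ℝ → ℝ → E2) : ℝ → ℝ := fun s => ∫ u in (0:ℝ)..1, ⟪X s u, perp (deriv (X s) u)⟫

section IntG

variable {T : ℝ} {X : ℝ → ℝ → E2}

lemma continuousOn_G (hT : 0 < T) (hX : IsSmoothClosedFamily T X) :
    ContinuousOn (Gf T X) (Ico 0 T) := by
  intro r hr
  set t' : ℝ := (r + T) / 2 with ht'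
  have hrt' : r < t' := by rw [ht']; linarith [hr.2]
  have ht'T : t' < T := by rw [ht']; linarith [hr.2]
  have h0t' : (0:ℝ) ≤ t' := le_trans hr.1 hrt'.le
  have hK : IsCompact (Icc (0:ℝ) t' ×ˢ Icc (0:ℝ) 1) := isCompact_Icc.prod isCompact_Icc
  have hKS : Icc (0:ℝ) t' ×ˢ Icc (0:ℝ) 1 ⊆ SJ T := fun p hp =>
    mem_SJ_iff.2 ⟨hp.1.1, lt_of_le_of_lt hp.1.2 ht'T⟩
  obtain ⟨C, hC⟩ := hK.exists_bound_of_continuousOn ((continuousOn_gJ hT hX).mono hKS)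
  apply intervalIntegral.continuousWithinAt_of_dominated_interval (bound := fun _ => C)
  · filter_upwards [self_mem_nhdsWithin] with s hs
    exact (continuous_slice_u (continuousOn_gJ hT hX) hs).aestronglyMeasurable
  · have h1 : Iio t' ∈ 𝓝[Ico 0 T] r := nhdsWithin_le_nhds (Iio_mem_nhds hrt')
    filter_upwards [h1, self_mem_nhdsWithin] with s hs1 hs2
    refine ae_of_all _ fun u hu => ?_
    have hu' : u ∈ Ioc (0:ℝ) 1 := by rwa [uIoc_of_le (by norm_num : (0:ℝ) ≤ 1)] at hu
    exact hC (s, u) ⟨⟨hs2.1, le_of_lt hs1⟩, ⟨hu'.1.le, hu'.2⟩⟩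
  · exact intervalIntegrable_const
  · exact ae_of_all _ fun u _ => (continuousOn_slice_t (continuousOn_gJ hT hX) u) r hr

lemma integral_g_eq (hT : 0 < T) (hX : IsSmoothClosedFamily T X) {s : ℝ} (hs : s ∈ Ico 0 T)
    (u : ℝ) :
    (∫ r in (0:ℝ)..s, gJ T X (r, u)) =
      ⟪X s u, perp (deriv (X s) u)⟫ - ⟪X 0 u, perp (deriv (X 0) u)⟫ := by
  have hIcc : Icc (0:ℝ) s ⊆ Ico 0 T := fun r hr => ⟨hr.1, lt_of_le_of_lt hr.2 hs.2⟩
  apply intervalIntegral.integral_eq_sub_of_hasDeriv_right_of_le hs.1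
  · intro r hr
    exact ((hasDerivWithinAt_integrand hT hX u (hIcc hr)).continuousWithinAt).mono hIcc
  · intro r hr
    have hr' : r ∈ Ico 0 T := ⟨hr.1.le, lt_trans hr.2 hs.2⟩
    have hmem : Ico 0 T ∈ 𝓝 r := Ico_mem_nhds hr.1 hr'.2
    exact ((hasDerivWithinAt_integrand hT hX u hr').hasDerivAt hmem).hasDerivWithinAt
  · have := (continuousOn_slice_t (continuousOn_gJ hT hX) u).mono hIcc
    rw [← uIcc_of_le hs.1] at this
    exact this.intervalIntegrable

lemma swap_integrals (hT : 0 < T) (hX : IsSmoothClosedFamily T X) {s : ℝ} (hs : s ∈ Ico 0 T) :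
    (∫ u in (0:ℝ)..1, (∫ r in (0:ℝ)..s, gJ T X (r, u))) = ∫ r in (0:ℝ)..s, Gf T X r := by
  have h01 : (0:ℝ) ≤ 1 := by norm_num
  have hint : Integrable (Function.uncurry fun u r => gJ T X (r, u))
      ((volume.restrict (Ioc (0:ℝ) 1)).prod (volume.restrict (Ioc (0:ℝ) s))) := by
    rw [Measure.prod_restrict]
    have hc : ContinuousOn (fun z : ℝ × ℝ => gJ T X (z.2, z.1)) (Icc (0:ℝ) 1 ×ˢ Icc (0:ℝ) s) := by
      refine (continuousOn_gJ hT hX).comp (Continuous.continuousOn (by fun_prop)) ?_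
      intro z hz
      exact mem_SJ_iff.2 ⟨hz.2.1, lt_of_le_of_lt hz.2.2 hs.2⟩
    exact (hc.integrableOn_compact (isCompact_Icc.prod isCompact_Icc)).mono_set
      (prod_mono Ioc_subset_Icc_self Ioc_subset_Icc_self)
  calc (∫ u in (0:ℝ)..1, (∫ r in (0:ℝ)..s, gJ T X (r, u)))
      = ∫ u in Ioc (0:ℝ) 1, (∫ r in Ioc (0:ℝ) s, gJ T X (r, u)) := by
        rw [intervalIntegral.integral_of_le h01]
        exact setIntegral_congr_fun measurableSet_Ioc fun u _ =>
          intervalIntegral.integral_of_le hs.1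
    _ = ∫ r in Ioc (0:ℝ) s, (∫ u in Ioc (0:ℝ) 1, gJ T X (r, u)) :=
        MeasureTheory.integral_integral_swap hint
    _ = ∫ r in (0:ℝ)..s, Gf T X r := by
        rw [intervalIntegral.integral_of_le hs.1]
        exact setIntegral_congr_fun measurableSet_Ioc fun r _ =>
          (intervalIntegral.integral_of_le h01).symm

end IntG

section Primitive

variable {T : ℝ} {X : ℝ → ℝ → E2}

lemma hasDerivWithinAt_primitive (hT : 0 < T) (hX : IsSmoothClosedFamily T X) {t : ℝ}
    (ht : t ∈ Ico 0 T) :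
    HasDerivWithinAt (fun s => ∫ r in (0:ℝ)..s, Gf T X r) (Gf T X t) (Ico 0 T) t := by
  have hGint : IntervalIntegrable (Gf T X) volume 0 t := by
    have h := (continuousOn_G hT hX).mono
      (fun r (hr : r ∈ Icc 0 t) => ⟨hr.1, lt_of_le_of_lt hr.2 ht.2⟩)
    rw [← uIcc_of_le ht.1] at h
    exact h.intervalIntegrable
  have hmeasIco : AEStronglyMeasurable (Gf T X) (volume.restrict (Ico 0 T)) :=
    (continuousOn_G hT hX).aestronglyMeasurable measurableSet_Ico
  rcases eq_or_lt_of_le ht.1 with h0 | h0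
  · -- boundary point t = 0
    have h0' : t = 0 := h0.symm
    subst h0'
    have hcont : ContinuousWithinAt (Gf T X) (Ici 0) 0 := by
      have h := (continuousOn_G hT hX) 0 ⟨le_rfl, hT⟩
      rwa [ContinuousWithinAt, nhdsWithin_Ico_eq_nhdsGE hT] at h
    have hmeas : StronglyMeasurableAtFilter (Gf T X) (𝓝[>] (0:ℝ)) volume :=
      ⟨Ico 0 T, mem_of_superset (Ioo_mem_nhdsGT_of_mem ⟨le_rfl, hT⟩) Ioo_subset_Ico_self,
        hmeasIco⟩
    have h := intervalIntegral.integral_hasDerivWithinAt_right (a := (0:ℝ)) (s := Ici (0:ℝ))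
      (t := Ioi (0:ℝ)) hGint hmeas (hcont.mono Ioi_subset_Ici_self)
    exact h.mono (fun x hx => hx.1)
  · -- interior-side point 0 < t
    have hmem : Ico 0 T ∈ 𝓝 t := Ico_mem_nhds h0 ht.2
    have hmeas : StronglyMeasurableAtFilter (Gf T X) (𝓝 t) volume := ⟨Ico 0 T, hmem, hmeasIco⟩
    have hcont : ContinuousAt (Gf T X) t := ((continuousOn_G hT hX) t ht).continuousAt hmem
    exact (intervalIntegral.integral_hasDerivAt_right hGint hmeas hcont).hasDerivWithinAt

lemma continuous_integrand_u (hX : IsSmoothClosedFamily T X) {w : ℝ} (hw : w ∈ Ico 0 T) :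
    Continuous (fun u => ⟪X w u, perp (deriv (X w) u)⟫) := by
  have hc2 : ContDiff ℝ 2 (X w) := (hX.2 w hw).1
  exact (hc2.continuous).inner (perpL.continuous.comp (hc2.continuous_deriv (by norm_num)))

lemma F1_rep (hT : 0 < T) (hX : IsSmoothClosedFamily T X) {s : ℝ} (hs : s ∈ Ico 0 T) :
    F1 X s = F1 X 0 + ∫ r in (0:ℝ)..s, Gf T X r := by
  have h0 : (0:ℝ) ∈ Ico 0 T := ⟨le_rfl, hT⟩
  have h1 : (∫ r in (0:ℝ)..s, Gf T X r)
      = ∫ u in (0:ℝ)..1, (⟪X s u, perp (deriv (X s) u)⟫ - ⟪X 0 u, perp (deriv (X 0) u)⟫) := by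
    rw [← swap_integrals hT hX hs]
    exact intervalIntegral.integral_congr fun u _ => integral_g_eq hT hX hs u
  rw [h1, intervalIntegral.integral_sub ((continuous_integrand_u hX hs).intervalIntegrable 0 1)
    ((continuous_integrand_u hX h0).intervalIntegrable 0 1)]
  rw [F1, F1]; ring

end Primitive

section IBP

variable {T : ℝ} {X : ℝ → ℝ → E2}

lemma Gf_eq (hT : 0 < T) (hX : IsSmoothClosedFamily T X) {t : ℝ} (ht : t ∈ Ico 0 T) :
    Gf T X t = 2 * ∫ u in (0:ℝ)..1, ⟪FD T X (t, u) (1, 0), perp (deriv (X t) u)⟫ := by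
  set a : ℝ → ℝ := fun u => ⟪FD T X (t, u) (1, 0), perp (deriv (X t) u)⟫ with ha
  set b : ℝ → ℝ := fun u => ⟪X t u, perp (FDD T X (t, u) (0, 1) (1, 0))⟫
    + ⟪deriv (X t) u, perp (FD T X (t, u) (1, 0))⟫ with hb
  have hc2 : ContDiff ℝ 2 (X t) := (hX.2 t ht).1
  -- the boundary function
  have hh : ∀ u, HasDerivAt (fun v => ⟪X t v, perp (FD T X (t, v) (1, 0))⟫) (b u) u := by
    intro u
    have hf : HasDerivAt (X t) (deriv (X t) u) u :=
      ((hc2.differentiable (by norm_num)) u).hasDerivAt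
    have hg := (perpL.hasFDerivAt).comp_hasDerivAt u (hasDerivAt_dud hT hX ht u)
    exact HasDerivAt.inner ℝ hf hg
  -- continuity facts
  have hcderiv : Continuous (deriv (X t)) := hc2.continuous_deriv (by norm_num)
  have hcV : Continuous (fun u => FD T X (t, u) ((1:ℝ), (0:ℝ))) :=
    (ContinuousLinearMap.apply ℝ E2 ((1:ℝ), (0:ℝ))).continuous.comp
      (continuous_slice_u (continuousOn_FD hT hX) ht)
  have hcFDD : Continuous (fun u => FDD T X (t, u) ((0:ℝ), (1:ℝ)) ((1:ℝ), (0:ℝ))) :=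
    (ContinuousLinearMap.apply ℝ E2 ((1:ℝ), (0:ℝ))).continuous.comp
      (((ContinuousLinearMap.apply ℝ ((ℝ × ℝ) →L[ℝ] E2) ((0:ℝ), (1:ℝ))).continuous).comp
        (continuous_slice_u (continuousOn_FDD hT hX) ht))
  have hca : Continuous a := hcV.inner (perpL.continuous.comp hcderiv)
  have hcb : Continuous b :=
    ((hc2.continuous).inner (perpL.continuous.comp hcFDD)).add
      (hcderiv.inner (perpL.continuous.comp hcV))
  -- pointwise decomposition
  have hdecomp : ∀ u, gJ T X (t, u) = 2 * a u + b u := by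
    intro u
    have h1 : gJ T X (t, u) = ⟪FD T X (t, u) (1, 0), perp (deriv (X t) u)⟫
        + ⟪X t u, perp (FDD T X (t, u) (0, 1) (1, 0))⟫ := by
      rw [gJ, deriv_X_eq hT hX ht u]; rfl
    have h2 : ⟪deriv (X t) u, perp (FD T X (t, u) (1, 0))⟫
        = -⟪FD T X (t, u) (1, 0), perp (deriv (X t) u)⟫ := inner_perp_antisymm _ _
    simp only [h1, ha, hb]
    rw [h2]; ring
  -- the boundary term vanishes
  have hint_b : (∫ u in (0:ℝ)..1, b u) = 0 := by
    rw [intervalIntegral.integral_eq_sub_of_hasDerivAt (fun u _ => hh u)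
      (hcb.intervalIntegrable 0 1)]
    have e1 : X t 1 = X t 0 := by have := (hX.2 t ht).2.1 0; rwa [zero_add] at this
    have e2 : FD T X (t, 1) ((1:ℝ), (0:ℝ)) = FD T X (t, 0) ((1:ℝ), (0:ℝ)) := by
      have := V_periodic hT hX ht 0; rwa [zero_add] at this
    rw [e1, e2, sub_self]
  have : Gf T X t = ∫ u in (0:ℝ)..1, (2 * a u + b u) :=
    intervalIntegral.integral_congr fun u _ => hdecomp u
  rw [this, intervalIntegral.integral_add (f := fun u => 2 * a u) ((continuous_const.mul hca).intervalIntegrable 0 1)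
    (hcb.intervalIntegrable 0 1), hint_b, add_zero,
    intervalIntegral.integral_const_mul]

end IBP

/-- First variation of the signed enclosed area for a smooth family of closed curves
on `[0,T)`: `dA/dt = ∫₀¹ (∂ₜX ⬝ n) |∂ᵤX| du`. -/
theorem area_first_variation (T : ℝ) (X : ℝ → ℝ → E2)
    (hX : IsSmoothClosedFamily T X) :
    ∀ t ∈ Ico (0:ℝ) T,
      HasDerivWithinAt (fun s => enclosedArea (X s))
        (∫ u in (0:ℝ)..1,
          ⟪derivWithin (fun s => X s u) (Ico 0 T) t, unitNormal (X t) u⟫ * ‖deriv (X t) u‖)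
        (Ico 0 T) t := by
  intro t ht
  have hT : 0 < T := lt_of_le_of_lt ht.1 ht.2
  have hF1 : HasDerivWithinAt (F1 X) (Gf T X t) (Ico 0 T) t :=
    ((hasDerivWithinAt_primitive hT hX ht).const_add (F1 X 0)).congr
      (fun s hs => F1_rep hT hX hs) (F1_rep hT hX ht)
  have hE : (fun s => enclosedArea (X s)) = fun s => (1/2) * F1 X s := rfl
  have hI : (∫ u in (0:ℝ)..1,
      ⟪derivWithin (fun s => X s u) (Ico 0 T) t, unitNormal (X t) u⟫ * ‖deriv (X t) u‖)
      = (1/2) * Gf T X t := by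
    rw [Gf_eq hT hX ht]
    have hpt : ∀ u, ⟪derivWithin (fun s => X s u) (Ico 0 T) t, unitNormal (X t) u⟫
        * ‖deriv (X t) u‖ = ⟪FD T X (t, u) (1, 0), perp (deriv (X t) u)⟫ := by
      intro u
      have hdw : derivWithin (fun s => X s u) (Ico 0 T) t = FD T X (t, u) (1, 0) :=
        (hasDerivWithinAt_V hT hX ht u).derivWithin (uniqueDiffOn_Ico 0 T t ht)
      have hne : ‖deriv (X t) u‖ ≠ 0 := norm_ne_zero_iff.2 ((hX.2 t ht).2.2 u)
      rw [hdw, unitNormal, real_inner_smul_right]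
      field_simp
    rw [intervalIntegral.integral_congr (fun u _ => hpt u)]
    ring
  rw [hE, hI]
  exact hF1.const_mul (1/2)
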